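/- Let X be a set, I a nonempty finite set, and (f_i)_{i∈I} a family of functions f_i : X → X having attractor A. Then f_i(X̃_α) ⊆ X̃_{iα} for every i ∈ I and every finite word α over I, where iα denotes the finite word obtained by prepending the letter i to α and X̃_β = X_β ∪ Y_β. -/

import Mathlib

open Filter Topology Set

/-- `φ : [0,∞) → [0,∞)` is a comparison function: it maps `[0,∞)` into `[0,∞)`,
is increasing, satisfies `φ t < t` for `t > 0`, and is right-continuous. -/
def IsComparisonFn (φ : ℝ → ℝ) : Prop :=
  (∀ t : ℝ, 0 ≤ t → 0 ≤ φ t) ∧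
  MonotoneOn φ (Set.Ici (0 : ℝ)) ∧
  (∀ t : ℝ, 0 < t → φ t < t) ∧
  (∀ t : ℝ, 0 ≤ t → ContinuousWithinAt φ (Set.Ici t) t)

/-- `f_{α₁…αₙ} = f_{α₁} ∘ f_{α₂} ∘ … ∘ f_{αₙ}` (the identity for the empty word). -/
def WordMap {X I : Type*} (f : I → X → X) : List I → X → X
  | [] => id
  | i :: w => f i ∘ WordMap f w

/-- `[α]_n`: the finite word consisting of the first `n` letters of the infinite word `α`. -/
def Pref {I : Type*} (α : ℕ → I) (n : ℕ) : List I := List.ofFn (fun k : Fin n => α (k : ℕ))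

/-- `X_w = f_w(X)`, the image of the whole space under the word map. -/
def WordSet {X I : Type*} (f : I → X → X) (w : List I) : Set X := Set.range (WordMap f w)

/-- A family `(f_i)_{i ∈ I}` of self-maps of `X` has attractor if:
(a) for every infinite word `α`, `⋂ₙ X_{[α]ₙ}` has a unique element `a_α`;
(b) whenever `a_α ≠ a_β`, some `X_{[α]_{n₀}}` and `X_{[β]_{n₀}}` are disjoint. -/
def HasAttractor {X I : Type*} (f : I → X → X) : Prop :=
  (∀ α : ℕ → I, ∃! a : X, ∀ n : ℕ, a ∈ WordSet f (Pref α n)) ∧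
  (∀ α β : ℕ → I, ∀ a b : X,
    (∀ n : ℕ, a ∈ WordSet f (Pref α n)) → (∀ n : ℕ, b ∈ WordSet f (Pref β n)) →
    a ≠ b →
    ∃ n₀ : ℕ, WordSet f (Pref α n₀) ∩ WordSet f (Pref β n₀) = ∅)

/-- Given a selection `a` of the points `a_β`,
`Y_w = {a_β : β ∈ Λ(I), X_w ∩ X_{[β]ₙ} ≠ ∅ for every n}`. -/
def YSet {X I : Type*} (f : I → X → X) (a : (ℕ → I) → X) (w : List I) : Set X :=
  {y | ∃ β : ℕ → I, y = a β ∧ ∀ n : ℕ, (WordSet f w ∩ WordSet f (Pref β n)).Nonempty}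

/-- `X̃_w = X_w ∪ Y_w`. -/
def XtSet {X I : Type*} (f : I → X → X) (a : (ℕ → I) → X) (w : List I) : Set X :=
  WordSet f w ∪ YSet f a w

/-- **Proposition 3.7 e).** `f_i(X̃_α) ⊆ X̃_{iα}` for every `i ∈ I` and every
finite word `α`. -/
theorem image_XtSet_subset {X I : Type*} [Finite I] [Nonempty I]
    (f : I → X → X) (hF : HasAttractor f)
    (a : (ℕ → I) → X) (ha : ∀ (α : ℕ → I) (n : ℕ), a α ∈ WordSet f (Pref α n)) :
    ∀ (i : I) (w : List I), f i '' XtSet f a w ⊆ XtSet f a (i :: w) := by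
  have step : ∀ (i : I) (w : List I) (x : X), x ∈ WordSet f w → f i x ∈ WordSet f (i :: w) := by
    rintro i w x ⟨u, hu⟩
    exact ⟨u, congrArg (f i) hu⟩
  intro i w x hx
  obtain ⟨y, hy, rfl⟩ := hx
  rcases hy with h | h
  · exact Or.inl (step i w y h)
  · obtain ⟨β, rfl, hβ⟩ := h
    set β' : ℕ → I := fun n => Nat.casesOn n i β with hβ'
    have hpref : ∀ n, Pref β' (n + 1) = i :: Pref β n := by
      intro n
      simp [Pref, List.ofFn_succ]; exact ⟨rfl, rfl⟩
    have hmem : ∀ n, f i (a β) ∈ WordSet f (Pref β' n) := by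
      intro n
      cases n with
      | zero => exact ⟨f i (a β), rfl⟩
      | succ n => rw [hpref]; exact step i _ _ (ha β n)
    have heq : f i (a β) = a β' := (hF.1 β').unique hmem (ha β')
    refine Or.inr ⟨β', heq, fun n => ?_⟩
    cases n with
    | zero =>
      obtain ⟨z, hz1, _⟩ := hβ 0
      exact ⟨f i z, step i w z hz1, f i z, rfl⟩
    | succ n =>
      obtain ⟨z, hz1, hz2⟩ := hβ n
      rw [hpref]
      exact ⟨f i z, step i w z hz1, step i _ z hz2⟩
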